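/- Let x : [t₀,∞) → ℝⁿ be three times differentiable at t, with g : ℝⁿ → ℝ differentiable with L-Lipschitz gradient, λ, γ > 0, and suppose (λ/t²)·x''(t) + (γ/t)·x'(t) + ∇g(x(t)) = 0 holds in a neighborhood of t where also x''' exists. Then ‖x'''(t)‖ ≤ (3γ/λ + L t²/λ)·‖x'(t)‖ + (γt/λ + 2/t)·‖x''(t)‖. -/

import Mathlib

/-- Bound on the third derivative of a solution of
`(λ/t²)x''(t) + (γ/t)x'(t) + ∇g(x(t)) = 0`. -/
theorem stmt_2 {n : ℕ} (g : EuclideanSpace ℝ (Fin n) → ℝ) (L lam γ t₀ t : ℝ)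
    (x x' x'' x''' : ℝ → EuclideanSpace ℝ (Fin n))
    (hg : Differentiable ℝ g)
    (hL : ∀ u u', ‖gradient g u - gradient g u'‖ ≤ L * ‖u - u'‖)
    (hlam : 0 < lam) (hγ : 0 < γ) (ht₀ : 0 < t₀) (ht : t₀ ≤ t)
    (hx' : ∀ s, HasDerivAt x (x' s) s)
    (hx'' : ∀ s, HasDerivAt x' (x'' s) s)
    (hx''' : HasDerivAt x'' (x''' t) t)
    (hode : ∀ᶠ s in nhds t,
      (lam / s ^ 2) • x'' s + (γ / s) • x' s + gradient g (x s) = 0) :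
    ‖x''' t‖ ≤ (3 * γ / lam + L * t ^ 2 / lam) * ‖x' t‖ +
      (γ * t / lam + 2 / t) * ‖x'' t‖ := by
  have htpos : 0 < t := lt_of_lt_of_le ht₀ ht
  have htne : t ≠ 0 := htpos.ne'
  have ht2 : (t : ℝ) ^ 2 ≠ 0 := pow_ne_zero _ htne
  have hlamne : lam ≠ 0 := hlam.ne'
  set ψ : ℝ → EuclideanSpace ℝ (Fin n) := fun s => gradient g (x s) with hψdef
  -- ψ agrees near t with an explicitly differentiable function
  have hodeψ : ∀ᶠ s in nhds t, ψ s =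
      (-(lam / s ^ 2)) • x'' s + (-(γ / s)) • x' s := by
    filter_upwards [hode] with s hs
    have h0 : ((lam / s ^ 2) • x'' s + (γ / s) • x' s) + ψ s = 0 := hs
    have := eq_neg_of_add_eq_zero_right h0
    rw [this, neg_add, neg_smul, neg_smul]
  -- derivative of the coefficient functions
  have h1 : HasDerivAt (fun s : ℝ => -(lam / s ^ 2)) (2 * lam / t ^ 3) t := by
    have h := ((hasDerivAt_const t lam).div (hasDerivAt_pow 2 t) ht2).neg
    refine h.congr_deriv ?_
    field_simp
    ring
  have h2 : HasDerivAt (fun s : ℝ => -(γ / s)) (γ / t ^ 2) t := by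
    have h := ((hasDerivAt_const t γ).div (hasDerivAt_id t) htne).neg
    refine h.congr_deriv ?_
    simp only [id]
    field_simp
    ring
  -- derivative of ψ at t
  set d : EuclideanSpace ℝ (Fin n) :=
    ((-(lam / t ^ 2)) • x''' t + (2 * lam / t ^ 3) • x'' t) +
      ((-(γ / t)) • x'' t + (γ / t ^ 2) • x' t) with hddef
  have hψd : HasDerivAt ψ d t := by
    have hφ : HasDerivAt
        (fun s => (-(lam / s ^ 2)) • x'' s + (-(γ / s)) • x' s) d t :=
      (h1.smul hx''').add (h2.smul (hx'' t))
    exact hφ.congr_of_eventuallyEq hodeψ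
  -- Lipschitz bound on ‖d‖
  have hdbound : ‖d‖ ≤ L * ‖x' t‖ := by
    have hs1 := (hasDerivAt_iff_tendsto_slope.1 hψd).norm
    have hs2 := ((hasDerivAt_iff_tendsto_slope.1 (hx' t)).norm).const_mul L
    refine le_of_tendsto_of_tendsto' hs1 hs2 ?_
    intro s
    rw [slope_def_module, slope_def_module, norm_smul, norm_smul]
    rw [mul_left_comm]
    refine mul_le_mul_of_nonneg_left ?_ (norm_nonneg _)
    exact hL _ _
  -- x'' agrees near t with an explicit function
  have hEq : ∀ᶠ s in nhds t,
      x'' s = (-(γ * s / lam)) • x' s + (-(s ^ 2 / lam)) • ψ s := by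
    filter_upwards [hode, eventually_ne_nhds htne] with s hs hsne
    have hs2 : (s : ℝ) ^ 2 ≠ 0 := pow_ne_zero _ hsne
    have h0 : (lam / s ^ 2) • x'' s = -((γ / s) • x' s + ψ s) := by
      have h0' : (lam / s ^ 2) • x'' s + ((γ / s) • x' s + ψ s) = 0 := by
        rw [← add_assoc]; exact hs
      exact eq_neg_of_add_eq_zero_left h0'
    have hsc : (s ^ 2 / lam) * (lam / s ^ 2) = 1 := by field_simp
    calc x'' s = ((s ^ 2 / lam) * (lam / s ^ 2)) • x'' s := by
          rw [hsc, one_smul]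
      _ = (s ^ 2 / lam) • ((lam / s ^ 2) • x'' s) := by rw [smul_smul]
      _ = (s ^ 2 / lam) • (-((γ / s) • x' s + ψ s)) := by rw [h0]
      _ = (-(γ * s / lam)) • x' s + (-(s ^ 2 / lam)) • ψ s := by
          rw [smul_neg, smul_add, smul_smul, neg_add, ← neg_smul, ← neg_smul]
          congr 2
          field_simp
  -- derivative of the explicit function
  have h3 : HasDerivAt (fun s : ℝ => -(γ * s / lam)) (-(γ / lam)) t := by
    have h := (((hasDerivAt_id t).const_mul γ).div_const lam).neg
    refine h.congr_deriv ?_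
    ring
  have h4 : HasDerivAt (fun s : ℝ => -(s ^ 2 / lam)) (-(2 * t / lam)) t := by
    have h := ((hasDerivAt_pow 2 t).div_const lam).neg
    refine h.congr_deriv ?_
    ring
  set D : EuclideanSpace ℝ (Fin n) :=
    ((-(γ * t / lam)) • x'' t + (-(γ / lam)) • x' t) +
      ((-(t ^ 2 / lam)) • d + (-(2 * t / lam)) • ψ t) with hDdef
  have hFD : HasDerivAt x'' D t := by
    have hF : HasDerivAt
        (fun s => (-(γ * s / lam)) • x' s + (-(s ^ 2 / lam)) • ψ s) D t :=
      (h3.smul (hx'' t)).add (h4.smul hψd)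
    exact hF.congr_of_eventuallyEq hEq
  have hxD : x''' t = D := hx'''.unique hFD
  -- bound on ‖ψ t‖
  have hψt : ‖ψ t‖ ≤ (lam / t ^ 2) * ‖x'' t‖ + (γ / t) * ‖x' t‖ := by
    have h0 : ((lam / t ^ 2) • x'' t + (γ / t) • x' t) + ψ t = 0 :=
      hode.self_of_nhds
    have h1' := eq_neg_of_add_eq_zero_right h0
    rw [h1']
    rw [norm_neg]
    calc ‖(lam / t ^ 2) • x'' t + (γ / t) • x' t‖
        ≤ ‖(lam / t ^ 2) • x'' t‖ + ‖(γ / t) • x' t‖ := norm_add_le _ _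
      _ ≤ (lam / t ^ 2) * ‖x'' t‖ + (γ / t) * ‖x' t‖ := by
          rw [norm_smul, norm_smul, Real.norm_eq_abs, Real.norm_eq_abs,
            abs_of_pos (by positivity), abs_of_pos (by positivity)]
  -- final bound
  have hD : ‖D‖ ≤ (γ / lam) * ‖x' t‖ + (γ * t / lam) * ‖x'' t‖ +
      ((2 * t / lam) * ‖ψ t‖ + (t ^ 2 / lam) * ‖d‖) := by
    calc ‖D‖ ≤ ‖(-(γ * t / lam)) • x'' t + (-(γ / lam)) • x' t‖ +
          ‖(-(t ^ 2 / lam)) • d + (-(2 * t / lam)) • ψ t‖ := norm_add_le _ _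
      _ ≤ (‖(-(γ * t / lam)) • x'' t‖ + ‖(-(γ / lam)) • x' t‖) +
          (‖(-(t ^ 2 / lam)) • d‖ + ‖(-(2 * t / lam)) • ψ t‖) :=
          add_le_add (norm_add_le _ _) (norm_add_le _ _)
      _ = (γ / lam) * ‖x' t‖ + (γ * t / lam) * ‖x'' t‖ +
          ((2 * t / lam) * ‖ψ t‖ + (t ^ 2 / lam) * ‖d‖) := by
          rw [norm_smul, norm_smul, norm_smul, norm_smul]
          simp only [Real.norm_eq_abs, abs_neg]
          rw [abs_of_pos (by positivity), abs_of_pos (by positivity),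
            abs_of_pos (by positivity), abs_of_pos (by positivity)]
          ring
  rw [hxD]
  have key : (2 * t / lam) * ‖ψ t‖ ≤ (2 / t) * ‖x'' t‖ + (2 * γ / lam) * ‖x' t‖ := by
    calc (2 * t / lam) * ‖ψ t‖
        ≤ (2 * t / lam) * ((lam / t ^ 2) * ‖x'' t‖ + (γ / t) * ‖x' t‖) :=
          mul_le_mul_of_nonneg_left hψt (by positivity)
      _ = (2 * t / lam * (lam / t ^ 2)) * ‖x'' t‖ +
          (2 * t / lam * (γ / t)) * ‖x' t‖ := by ring
      _ = (2 / t) * ‖x'' t‖ + (2 * γ / lam) * ‖x' t‖ := by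
          have e1 : 2 * t / lam * (lam / t ^ 2) = 2 / t := by
            field_simp
          have e2 : 2 * t / lam * (γ / t) = 2 * γ / lam := by
            field_simp
          rw [e1, e2]
  have keyd : (t ^ 2 / lam) * ‖d‖ ≤ (t ^ 2 / lam) * (L * ‖x' t‖) :=
    mul_le_mul_of_nonneg_left hdbound (by positivity)
  have : (γ / lam) * ‖x' t‖ + (γ * t / lam) * ‖x'' t‖ +
      (((2 / t) * ‖x'' t‖ + (2 * γ / lam) * ‖x' t‖) + (t ^ 2 / lam) * (L * ‖x' t‖))
      = (3 * γ / lam + L * t ^ 2 / lam) * ‖x' t‖ +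
        (γ * t / lam + 2 / t) * ‖x'' t‖ := by ring
  linarith [hD, key, keyd]
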